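/- For any natural numbers a, b, c with c ≥ 1, the determinant of the c×c matrix with (i,j)-entry C(i+j+a+b, i+a) equals ∏_{k=0}^{c-1} ∏_{j=0}^{b-1} ∏_{i=0}^{a-1} (i+j+k+2)/(i+j+k+1). -/

import Mathlib

open Finset Polynomial Nat

private lemma fact_add_eq (x j : ℕ) :
    (x + j)! = x ! * ∏ t ∈ Finset.range j, (x + 1 + t) := by
  induction j with
  | zero => simp
  | succ j ih =>
      rw [Finset.prod_range_succ, ← mul_assoc, ← ih, ← Nat.add_assoc,
        Nat.factorial_succ]
      ring

private lemma telA (a x : ℕ) :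
    ∏ i ∈ Finset.range a, (((i : ℚ) + x + 2) / ((i : ℚ) + x + 1)) =
      ((a : ℚ) + x + 1) / ((x : ℚ) + 1) := by
  have hx : (x : ℚ) + 1 ≠ 0 := by positivity
  induction a with
  | zero => simp [div_self hx]
  | succ a ih =>
      rw [Finset.prod_range_succ, ih]
      have h : (a : ℚ) + x + 1 ≠ 0 := by positivity
      push_cast
      field_simp
      ring

private lemma telB (a b k : ℕ) :
    ∏ j ∈ Finset.range b, (((a : ℚ) + j + k + 1) / ((j : ℚ) + k + 1)) =
      (((a + b + k)! : ℚ) * (k ! : ℚ)) / (((a + k)! : ℚ) * ((b + k)! : ℚ)) := by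
  induction b with
  | zero => simp; rw [div_self]; positivity
  | succ b ih =>
      rw [Finset.prod_range_succ, ih]
      have h1 : ((a + k)! : ℚ) ≠ 0 := by positivity
      have h2 : ((b + k)! : ℚ) ≠ 0 := by positivity
      have h3 : ((a + b + k)! : ℚ) ≠ 0 := by positivity
      have h4 : ((b : ℚ) + k + 1) ≠ 0 := by positivity
      have e1 : (a + (b + 1) + k)! = (a + b + k + 1) * (a + b + k)! := by
        have : a + (b + 1) + k = (a + b + k) + 1 := by ring
        rw [this, Nat.factorial_succ]
      have e2 : ((b + 1) + k)! = (b + k + 1) * (b + k)! := by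
        have : (b + 1) + k = (b + k) + 1 := by ring
        rw [this, Nat.factorial_succ]
      rw [e1, e2]
      push_cast
      field_simp

private lemma perk (a b k : ℕ) :
    ∏ j ∈ Finset.range b, ∏ i ∈ Finset.range a,
        (((i : ℚ) + j + k + 2) / ((i : ℚ) + j + k + 1)) =
      (((a + b + k)! : ℚ) * (k ! : ℚ)) / (((a + k)! : ℚ) * ((b + k)! : ℚ)) := by
  rw [← telB a b k]
  refine Finset.prod_congr rfl fun j _ => ?_
  have := telA a (j + k)
  push_cast at this ⊢
  convert this using 2 <;> ring_nf

theorem det_macmahon_box (a b c : ℕ) (hc : 1 ≤ c) :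
    Matrix.det (Matrix.of fun i j : Fin c =>
        (((i : ℕ) + (j : ℕ) + a + b).choose ((i : ℕ) + a) : ℚ)) =
      ∏ k ∈ Finset.range c, ∏ j ∈ Finset.range b, ∏ i ∈ Finset.range a,
        ((i + j + k + 2 : ℚ) / (i + j + k + 1 : ℚ)) := by
  obtain ⟨n, rfl⟩ : ∃ n, c = n + 1 := ⟨c - 1, (Nat.succ_pred_eq_of_pos hc).symm⟩
  set p : Fin (n+1) → ℚ[X] :=
    fun j => ∏ t ∈ Finset.range (j : ℕ), (X + C ((t : ℚ) + 1)) with hp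
  have hmonic : ∀ j, (p j).Monic := fun j =>
    monic_prod_of_monic _ _ fun t _ => monic_X_add_C _
  have hdeg : ∀ j : Fin (n+1), (p j).natDegree = (j : ℕ) := by
    intro j
    rw [hp, natDegree_prod _ _ (fun t _ => (monic_X_add_C _).ne_zero)]
    simp only [natDegree_X_add_C]
    simp
  set u : ℕ → ℚ := fun i => ((a + b + i)! : ℚ) / ((i + a)! : ℚ) with hu
  set w : ℕ → ℚ := fun j => (((j + b)! : ℚ))⁻¹ with hw
  have heval : ∀ (i j : Fin (n+1)),
      (p j).eval ((a : ℚ) + b + (i : ℕ)) =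
        ((∏ t ∈ Finset.range (j : ℕ), (a + b + (i : ℕ) + 1 + t) : ℕ) : ℚ) := by
    intro i j
    rw [hp, eval_prod]
    push_cast
    refine Finset.prod_congr rfl fun t _ => ?_
    simp only [eval_add, eval_X, eval_C]
    ring
  have entry : ∀ i j : Fin (n+1),
      (((i : ℕ) + (j : ℕ) + a + b).choose ((i : ℕ) + a) : ℚ) =
        u (i : ℕ) * (w (j : ℕ) * (p j).eval ((a : ℚ) + b + (i : ℕ))) := by
    intro i j
    have hle : (i : ℕ) + a ≤ (i : ℕ) + (j : ℕ) + a + b := by omega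
    rw [Nat.cast_choose ℚ hle]
    have hsub : (i : ℕ) + (j : ℕ) + a + b - ((i : ℕ) + a) = (j : ℕ) + b := by omega
    rw [hsub]
    have hfac : ((i : ℕ) + (j : ℕ) + a + b)! =
        (a + b + (i : ℕ))! * ∏ t ∈ Finset.range (j : ℕ), (a + b + (i : ℕ) + 1 + t) := by
      have h : (i : ℕ) + (j : ℕ) + a + b = (a + b + (i : ℕ)) + (j : ℕ) := by ring
      rw [h, fact_add_eq]
    rw [hfac, heval i j, hu, hw]
    have h1 : (((i : ℕ) + a)! : ℚ) ≠ 0 := by positivity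
    have h2 : ((((j : ℕ) + b))! : ℚ) ≠ 0 := by positivity
    push_cast
    field_simp
  have hM : (Matrix.of fun i j : Fin (n+1) =>
        (((i : ℕ) + (j : ℕ) + a + b).choose ((i : ℕ) + a) : ℚ)) =
      Matrix.of fun i j : Fin (n+1) =>
        u (i : ℕ) * ((Matrix.of fun i j : Fin (n+1) =>
          w (j : ℕ) * (p j).eval ((a : ℚ) + b + (i : ℕ))) i j) := by
    ext i j
    exact entry i j
  rw [hM, Matrix.det_mul_column]
  have hM2 : (Matrix.of fun i j : Fin (n+1) =>
        w (j : ℕ) * (p j).eval ((a : ℚ) + b + (i : ℕ))) =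
      Matrix.of fun i j : Fin (n+1) =>
        w (j : ℕ) * ((Matrix.of fun i j : Fin (n+1) =>
          (p j).eval ((a : ℚ) + b + (i : ℕ))) i j) := rfl
  rw [hM2, Matrix.det_mul_row]
  have hvdm : (Matrix.of fun i j : Fin (n+1) =>
        (p j).eval ((a : ℚ) + b + (i : ℕ))).det = (Nat.superFactorial n : ℚ) := by
    rw [← Matrix.det_eval_matrixOfPolynomials_eq_det_vandermonde
        (fun i : Fin (n+1) => (a : ℚ) + b + (i : ℕ)) p hdeg hmonic]
    have h : (fun i : Fin (n+1) => (a : ℚ) + b + (i : ℕ)) =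
        fun i : Fin (n+1) => ((i : ℕ) : ℚ) + ((a : ℚ) + b) := by
      funext i; ring
    rw [h, Matrix.det_vandermonde_add]
    exact Matrix.det_vandermonde_id_eq_superFactorial n
  rw [hvdm]
  rw [Fin.prod_univ_eq_prod_range (fun i => u i) (n+1),
    Fin.prod_univ_eq_prod_range (fun j => w j) (n+1)]
  have hsf : (Nat.superFactorial n : ℚ) = ∏ k ∈ Finset.range (n+1), (k ! : ℚ) := by
    rw [← Nat.cast_prod, Nat.prod_range_succ_factorial]
  rw [hsf]
  rw [Finset.prod_congr rfl fun k _ => perk a b k]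
  rw [← Finset.prod_mul_distrib, ← Finset.prod_mul_distrib]
  refine Finset.prod_congr rfl fun k _ => ?_
  show ((a + b + k)! : ℚ) / ((k + a)! : ℚ) * ((((k + b)! : ℚ))⁻¹ * (k ! : ℚ)) = _
  have h1 : ((k + a)! : ℚ) ≠ 0 := by positivity
  have h2 : ((k + b)! : ℚ) ≠ 0 := by positivity
  have e1 : k + a = a + k := by ring
  have e2 : k + b = b + k := by ring
  rw [e1, e2]
  have h3 : ((a + k)! : ℚ) ≠ 0 := by positivity
  have h4 : ((b + k)! : ℚ) ≠ 0 := by positivity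
  field_simp
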